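/- Proposition (Liberalism, sufficiency direction): Suppose each i ∈ N ∪ {0} has a variational Bewley preference (uᵢ, cᵢ), Preference Diversity holds with witnesses x̄ⁱ, x̲ⁱ, and there exist α ∈ ℝⁿ₊, β ∈ ℝ with u₀ = Σᵢ αᵢuᵢ + β and c₀(p) ≥ max_i αᵢcᵢ(p) for all p ∈ Δ(S). Then Liberalism holds: for each i ∈ N and all acts f, g taking values on the line through x̄ⁱ and x̲ⁱ, f ≿ᵢ g implies f ≿₀ g. -/

import Mathlib

open Finset ENNReal

/-- `p` is a probability distribution on the finite state space `S`. -/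
def IsProb {S : Type*} [Fintype S] (p : S → ℝ) : Prop :=
  (∀ s, 0 ≤ p s) ∧ ∑ s, p s = 1

/-- `u` is an affine function. -/
def IsAffineFn {X : Type*} [AddCommGroup X] [Module ℝ X] (u : X → ℝ) : Prop :=
  ∀ x y : X, ∀ t : ℝ, u (t • x + (1 - t) • y) = t * u x + (1 - t) * u y

/-- `u` is unbounded. -/
def UnboundedFn {X : Type*} (u : X → ℝ) : Prop :=
  ∀ M : ℝ, ∃ x, M < |u x|

/-- The variational Bewley preference induced by `(u, c)`:
`f ≿ g` iff `∑ p(s)u(f(s)) + c(p) ≥ ∑ p(s)u(g(s))` for all `p ∈ Δ(S)`. -/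
def VBPref {S : Type*} [Fintype S] {X : Type*} (u : X → ℝ)
    (c : (S → ℝ) → ℝ≥0∞) (f g : S → X) : Prop :=
  ∀ p : S → ℝ, IsProb p →
    ((∑ s, p s * u (g s) : ℝ) : EReal) ≤ ((∑ s, p s * u (f s) : ℝ) : EReal) + (c p : EReal)

/-- The Bewley preference induced by `(u, P)`. -/
def BewPref {S : Type*} [Fintype S] {X : Type*} (u : X → ℝ)
    (P : Set (S → ℝ)) (f g : S → X) : Prop :=
  ∀ p ∈ P, (∑ s, p s * u (g s)) ≤ ∑ s, p s * u (f s)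

/-- `min_{p ∈ Δ(S)} c(p) = 0` (the minimum value 0 is attained). -/
def MinZero {S : Type*} [Fintype S] (c : (S → ℝ) → ℝ≥0∞) : Prop :=
  ∃ p : S → ℝ, IsProb p ∧ c p = 0

/-- Convexity of the perception function `c` on the simplex. -/
def ConvexPerc {S : Type*} [Fintype S] (c : (S → ℝ) → ℝ≥0∞) : Prop :=
  ∀ p q : S → ℝ, IsProb p → IsProb q → ∀ t : ℝ, 0 ≤ t → t ≤ 1 →
    c (fun s => t * p s + (1 - t) * q s) ≤
      ENNReal.ofReal t * c p + ENNReal.ofReal (1 - t) * c q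

theorem stmt13 {S : Type*} [Fintype S] {d n : ℕ}
    (u : Fin n → EuclideanSpace ℝ (Fin d) → ℝ) (c : Fin n → (S → ℝ) → ℝ≥0∞)
    (u0 : EuclideanSpace ℝ (Fin d) → ℝ) (c0 : (S → ℝ) → ℝ≥0∞)
    (hu : ∀ i, IsAffineFn (u i)) (hc : ∀ i, MinZero (c i))
    (hu0 : IsAffineFn u0) (hc0 : MinZero c0)
    (xb xu : Fin n → EuclideanSpace ℝ (Fin d))
    (hdiv : ∀ i, u i (xu i) < u i (xb i) ∧ ∀ j, j ≠ i → u j (xb i) = u j (xu i))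
    (α : Fin n → ℝ) (β : ℝ) (hα : ∀ i, 0 ≤ α i)
    (hrep : ∀ x, u0 x = ∑ i, α i * u i x + β)
    (hineq : ∀ p : S → ℝ, IsProb p → ∀ i, ENNReal.ofReal (α i) * c i p ≤ c0 p) :
    ∀ i, ∀ f g : S → EuclideanSpace ℝ (Fin d),
      (∀ s, ∃ t : ℝ, f s = t • xb i + (1 - t) • xu i) →
      (∀ s, ∃ t : ℝ, g s = t • xb i + (1 - t) • xu i) →
      VBPref (u i) (c i) f g → VBPref u0 c0 f g := by
  intro i f g hf hg hfg p hp
  have hK : ∀ x : EuclideanSpace ℝ (Fin d), (∃ t : ℝ, x = t • xb i + (1 - t) • xu i) →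
      u0 x = α i * u i x + ((∑ j ∈ Finset.univ.erase i, α j * u j (xu i)) + β) := by
    rintro x ⟨t, rfl⟩
    rw [hrep, ← Finset.add_sum_erase _ _ (Finset.mem_univ i), add_assoc]
    congr 2
    refine Finset.sum_congr rfl fun j hj => ?_
    have hji : j ≠ i := (Finset.mem_erase.mp hj).1
    rw [hu j, (hdiv i).2 j hji]
    ring
  set K : ℝ := (∑ j ∈ Finset.univ.erase i, α j * u j (xu i)) + β with hKdef
  have hsum : ∀ h : S → EuclideanSpace ℝ (Fin d),
      (∀ s, ∃ t : ℝ, h s = t • xb i + (1 - t) • xu i) →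
      ∑ s, p s * u0 (h s) = α i * (∑ s, p s * u i (h s)) + K := by
    intro h hh
    calc ∑ s, p s * u0 (h s) = ∑ s, (α i * (p s * u i (h s)) + K * p s) := by
          refine Finset.sum_congr rfl fun s _ => ?_
          rw [hK _ (hh s)]; ring
      _ = α i * (∑ s, p s * u i (h s)) + K * ∑ s, p s := by
          rw [Finset.sum_add_distrib, Finset.mul_sum, Finset.mul_sum]
      _ = α i * (∑ s, p s * u i (h s)) + K := by rw [hp.2, mul_one]
  set F : ℝ := ∑ s, p s * u i (f s) with hFdef
  set G : ℝ := ∑ s, p s * u i (g s) with hGdef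
  have hFG : (G : EReal) ≤ (F : EReal) + (c i p : EReal) := hfg p hp
  rw [hsum f hf, hsum g hg]
  rcases eq_or_lt_of_le (hα i) with hzero | hpos
  · rw [← hzero]
    simp only [zero_mul, zero_add]
    exact le_add_of_nonneg_right (EReal.coe_ennreal_nonneg _)
  · by_cases hci : c i p = ⊤
    · have h0 : c0 p = ⊤ := by
        have := hineq p hp i
        rw [hci, ENNReal.mul_top (by positivity)] at this
        exact top_le_iff.mp this
      rw [h0]
      rw [show ((⊤ : ℝ≥0∞) : EReal) = ⊤ from rfl, EReal.add_top_of_ne_bot (EReal.coe_ne_bot _)]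
      exact le_top
    · set t : ℝ := (c i p).toReal with htdef
      have ht0 : 0 ≤ t := ENNReal.toReal_nonneg
      have hcit : (c i p : EReal) = (t : EReal) := by
        rw [show (c i p) = ENNReal.ofReal t from (ENNReal.ofReal_toReal hci).symm,
          EReal.coe_ennreal_ofReal, max_eq_left ht0]
      have hGFt : G ≤ F + t := by
        rw [hcit, ← EReal.coe_add, EReal.coe_le_coe_iff] at hFG
        exact hFG
      have hreal : α i * G + K ≤ (α i * F + K) + α i * t := by nlinarith [hα i]
      have hstep : ((α i * t : ℝ) : EReal) ≤ (c0 p : EReal) := by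
        have h1 : ENNReal.ofReal (α i * t) ≤ c0 p := by
          rw [ENNReal.ofReal_mul (hα i), htdef, ENNReal.ofReal_toReal hci]
          exact hineq p hp i
        calc ((α i * t : ℝ) : EReal) = ((ENNReal.ofReal (α i * t) : ℝ≥0∞) : EReal) := by
              rw [EReal.coe_ennreal_ofReal, max_eq_left (by positivity)]
          _ ≤ (c0 p : EReal) := EReal.coe_ennreal_le_coe_ennreal_iff.mpr h1
      calc ((α i * G + K : ℝ) : EReal) ≤ ((α i * F + K : ℝ) : EReal) + ((α i * t : ℝ) : EReal) := by
            rw [← EReal.coe_add]; exact_mod_cast hreal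
        _ ≤ ((α i * F + K : ℝ) : EReal) + (c0 p : EReal) := add_le_add_right hstep _
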